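/- Let G be a group, l a prime, and G' an abelian normal subgroup of G of index l, and let ver : G → G' denote the transfer homomorphism. Then the image of ver is contained in the center Z(G) of G. (Claim im(ver) ⊆ Z(G) from the proof of Lemma 4.1.) -/

import Mathlib

open Subgroup Subgroup.leftTransversals MonoidHom MulAction
open scoped Pointwise
open scoped IsMulCommutative

section Aux

variable {G : Type*} [Group G] (H : Subgroup G) [H.Normal] [IsMulCommutative H] [H.FiniteIndex]

lemma conj_mem_iff (x a : G) : a ∈ H ↔ x * a * x⁻¹ ∈ H := by
  constructor
  · exact fun h => (inferInstance : H.Normal).conj_mem a h x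
  · intro h
    have := (inferInstance : H.Normal).conj_mem _ h x⁻¹
    simpa [mul_assoc] using this

lemma map_conj_eq (x : G) : H.map ((MulAut.conj x : G ≃* G) : G →* G) = H := by
  ext a
  simp only [Subgroup.mem_map]
  constructor
  · rintro ⟨b, hb, rfl⟩
    simpa using ((conj_mem_iff H x b).mp hb)
  · intro ha
    exact ⟨x⁻¹ * a * x, by
      have := (conj_mem_iff H x⁻¹ a).mp ha
      simpa [mul_assoc] using this, by simp [MulAut.conj]; group⟩

/-- conjugation of a left transversal -/
noncomputable def conjT (x : G) (T : H.LeftTransversal) :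
    H.LeftTransversal :=
  ⟨(fun a => x * a * x⁻¹) '' (T : Set G), by
    refine isComplement_iff_existsUnique_inv_mul_mem.mpr fun g => ?_
    obtain ⟨t, ht1, ht2⟩ :=
      isComplement_iff_existsUnique_inv_mul_mem.mp T.2 (x⁻¹ * g * x)
    refine ⟨⟨x * t * x⁻¹, Set.mem_image_of_mem _ t.2⟩, ?_, ?_⟩
    · show (x * (t : G) * x⁻¹)⁻¹ * g ∈ H
      rw [conj_mem_iff H x⁻¹]
      have : x⁻¹ * ((x * (t : G) * x⁻¹)⁻¹ * g) * x⁻¹⁻¹ = (t : G)⁻¹ * (x⁻¹ * g * x) := by group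
      rw [this]; exact ht1
    · rintro ⟨-, t', ht', rfl⟩ h
      have h0 : (x * t' * x⁻¹)⁻¹ * g ∈ H := h
      have h' : (t' : G)⁻¹ * (x⁻¹ * g * x) ∈ H := by
        rw [conj_mem_iff H x⁻¹] at h0
        have e : x⁻¹ * ((x * t' * x⁻¹)⁻¹ * g) * x⁻¹⁻¹ = t'⁻¹ * (x⁻¹ * g * x) := by group
        rwa [e] at h0
      have ht'' : (⟨t', ht'⟩ : (T : Set G)) = t := ht2 ⟨t', ht'⟩ h'
      have hv : t' = (t : G) := congrArg Subtype.val ht''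
      exact Subtype.ext (by rw [show ((⟨(fun a => x * a * x⁻¹) t', Set.mem_image_of_mem _ ht'⟩ :
        ((fun a => x * a * x⁻¹) '' (T : Set G))) : G) = x * t' * x⁻¹ from rfl, hv])⟩

/-- quotient equiv induced by conjugation -/
noncomputable def cq (x : G) : G ⧸ H ≃* G ⧸ H :=
  QuotientGroup.congr H H (MulAut.conj x) (map_conj_eq H x)

lemma toEquiv_conjT (x : G) (T : H.LeftTransversal) (q : G ⧸ H) :
    (IsComplement.leftQuotientEquiv (conjT H x T).2 (cq H x q) : G) =
      x * (IsComplement.leftQuotientEquiv T.2 q : G) * x⁻¹ := by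
  set t := IsComplement.leftQuotientEquiv T.2 q with ht
  have hmem : x * (t : G) * x⁻¹ ∈ ((conjT H x T) : Set G) := Set.mem_image_of_mem _ t.2
  have : IsComplement.leftQuotientEquiv (conjT H x T).2 (cq H x q) = ⟨x * (t : G) * x⁻¹, hmem⟩ := by
    rw [Equiv.apply_eq_iff_eq_symm_apply]
    show cq H x q = Quotient.mk'' (x * (t : G) * x⁻¹)
    have h1 : (Quotient.mk'' ((t : G)) : G ⧸ H) = q := IsComplement.quotientGroupMk_leftQuotientEquiv T.2 q
    have h2 : (Quotient.mk'' (x * (t : G) * x⁻¹) : G ⧸ H) = cq H x (Quotient.mk'' (t : G)) := by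
      show _ = QuotientGroup.congr H H (MulAut.conj x) (map_conj_eq H x) (QuotientGroup.mk _)
      rw [QuotientGroup.congr_mk]
      rfl
    rw [h2, h1]
  rw [this]

end Aux

section Aux2

variable {G : Type*} [Group G] (H : Subgroup G) [H.Normal] [IsMulCommutative H] [H.FiniteIndex]

lemma diff_conjT (x : G) (S T : H.LeftTransversal) :
    diff (MonoidHom.id H) (conjT H x S) (conjT H x T) =
      MulAut.conjNormal x (diff (MonoidHom.id H) S T) := by
  letI := H.fintypeQuotientOfFiniteIndex
  unfold Subgroup.leftTransversals.diff
  rw [map_prod]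
  refine (Fintype.prod_equiv (cq H x).toEquiv _ _ fun q => ?_).symm
  ext
  show x * ((IsComplement.leftQuotientEquiv S.2 q : G)⁻¹ *
      (IsComplement.leftQuotientEquiv T.2 q : G)) * x⁻¹ =
    ((IsComplement.leftQuotientEquiv (conjT H x S).2 (cq H x q) : G))⁻¹ *
      (IsComplement.leftQuotientEquiv (conjT H x T).2 (cq H x q) : G)
  rw [toEquiv_conjT, toEquiv_conjT]
  group

lemma smul_conjT (x g : G) (T : H.LeftTransversal) :
    (x * g * x⁻¹) • conjT H x T = conjT H x (g • T) := by
  apply Subtype.ext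
  show (x * g * x⁻¹) • ((fun a => x * a * x⁻¹) '' (T : Set G)) =
    (fun a => x * a * x⁻¹) '' (g • (T : Set G))
  ext s
  simp only [Set.mem_smul_set, Set.mem_image, smul_eq_mul]
  constructor
  · rintro ⟨-, ⟨a, ha, rfl⟩, rfl⟩
    exact ⟨g * a, ⟨a, ha, rfl⟩, by group⟩
  · rintro ⟨-, ⟨a, ha, rfl⟩, rfl⟩
    exact ⟨x * a * x⁻¹, ⟨a, ha, rfl⟩, by group⟩

lemma transfer_conj (x g : G) :
    MonoidHom.transfer (MonoidHom.id H) (x * g * x⁻¹) =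
      MulAut.conjNormal x (MonoidHom.transfer (MonoidHom.id H) g) := by
  let T : H.LeftTransversal := default
  rw [MonoidHom.transfer_def (MonoidHom.id H) (conjT H x T), smul_conjT, diff_conjT,
    ← MonoidHom.transfer_def (MonoidHom.id H) T]

end Aux2

/-- Claim from the proof of Lemma 4.1: for an abelian normal subgroup `G'` of prime
index `l` in `G`, the image of the transfer map `ver : G → G'` is contained in the
center `Z(G)`. -/
theorem stmt9 (G : Type*) [Group G] (l : ℕ) (hl : l.Prime)
    (G' : Subgroup G) [G'.Normal] [IsMulCommutative G'] [G'.FiniteIndex]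
    (hidx : G'.index = l) :
    ∀ g : G, ((MonoidHom.transfer (MonoidHom.id G') g : G') : G) ∈ Subgroup.center G := by
  intro g
  rw [Subgroup.mem_center_iff]
  intro y
  have h1 := transfer_conj G' y g
  have h2 : MonoidHom.transfer (MonoidHom.id G') (y * g * y⁻¹) =
      MonoidHom.transfer (MonoidHom.id G') g := by
    rw [map_mul, map_mul, map_inv,
      mul_comm (MonoidHom.transfer (MonoidHom.id G') y) (MonoidHom.transfer (MonoidHom.id G') g),
      mul_inv_cancel_right]
  rw [h2] at h1
  have h3 := congrArg (Subtype.val) h1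
  rw [MulAut.conjNormal_apply] at h3
  have := h3.symm
  calc y * ((MonoidHom.transfer (MonoidHom.id G') g : G') : G)
      = (y * ((MonoidHom.transfer (MonoidHom.id G') g : G') : G) * y⁻¹) * y := by group
    _ = ((MonoidHom.transfer (MonoidHom.id G') g : G') : G) * y := by rw [this]
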